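/- arXiv:2602.02317 — 2 statements merged into one kernel-verified Lean document; each statement's English description precedes it below -/
import Mathlib

section
/- For all L₁, L₂, M₁, M₂, M₃ ≥ 0 there exists C ≥ 0 with the following property. Let E and F be real normed vector spaces, let h₁, h₂ : E → F be twice continuously differentiable with sup_{x∈E} ‖Dh_i(x)‖ ≤ L₁ and sup_{x∈E} ‖D²h_i(x)‖ ≤ L₂ for i = 1,2, and let φ : F → ℝ be three times continuously differentiable with sup_{y∈F} ‖D^s φ(y)‖ ≤ M_s for s = 1,2,3. Then for all reals d₀, d₁, d₂ with sup_{y∈E} ‖h₁(y) − h₂(y)‖ ≤ d₀, sup_{y∈E} ‖Dh₁(y) − Dh₂(y)‖ ≤ d₁ and sup_{y∈E} ‖D²h₁(y) − D²h₂(y)‖ ≤ d₂, and for every x ∈ E: |φ(h₁(x)) − φ(h₂(x))| + ‖D(φ∘h₁)(x) − D(φ∘h₂)(x)‖ + ‖D²(φ∘h₁)(x) − D²(φ∘h₂)(x)‖ ≤ C·(d₀ + d₁ + d₂). -/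
universe u v
set_option maxHeartbeats 2000000

section helpers
variable {E : Type*} {F : Type*} [NormedAddCommGroup E] [NormedSpace ℝ E]
  [NormedAddCommGroup F] [NormedSpace ℝ F]

private lemma norm_fderiv_eq_iFD1' (f : E → F) (x : E) :
    ‖fderiv ℝ f x‖ = ‖iteratedFDeriv ℝ 1 f x‖ := by
  rw [← norm_iteratedFDeriv_fderiv (n := 0), norm_iteratedFDeriv_zero]

private lemma norm_fderiv_sub_le' (f g : E → F) (x : E) :
    ‖fderiv ℝ f x - fderiv ℝ g x‖ ≤ ‖iteratedFDeriv ℝ 1 f x - iteratedFDeriv ℝ 1 g x‖ := by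
  refine ContinuousLinearMap.opNorm_le_bound _ (norm_nonneg _) fun u => ?_
  have h : (fderiv ℝ f x - fderiv ℝ g x) u
      = (iteratedFDeriv ℝ 1 f x - iteratedFDeriv ℝ 1 g x) (fun _ => u) := by
    simp
  rw [h]
  calc ‖(iteratedFDeriv ℝ 1 f x - iteratedFDeriv ℝ 1 g x) (fun _ => u)‖
      ≤ ‖iteratedFDeriv ℝ 1 f x - iteratedFDeriv ℝ 1 g x‖ * ∏ _i : Fin 1, ‖u‖ :=
        ContinuousMultilinearMap.le_opNorm _ _
    _ = ‖iteratedFDeriv ℝ 1 f x - iteratedFDeriv ℝ 1 g x‖ * ‖u‖ := by simp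

private lemma norm_fderiv2_sub_le' (f g : E → F) (x : E) :
    ‖fderiv ℝ (fderiv ℝ f) x - fderiv ℝ (fderiv ℝ g) x‖
      ≤ ‖iteratedFDeriv ℝ 2 f x - iteratedFDeriv ℝ 2 g x‖ := by
  refine ContinuousLinearMap.opNorm_le_bound _ (norm_nonneg _) fun u => ?_
  refine ContinuousLinearMap.opNorm_le_bound _ (by positivity) fun v => ?_
  have h : (fderiv ℝ (fderiv ℝ f) x - fderiv ℝ (fderiv ℝ g) x) u v
      = (iteratedFDeriv ℝ 2 f x - iteratedFDeriv ℝ 2 g x) ![u, v] := by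
    simp [iteratedFDeriv_two_apply]
  rw [h]
  calc ‖(iteratedFDeriv ℝ 2 f x - iteratedFDeriv ℝ 2 g x) ![u, v]‖
      ≤ ‖iteratedFDeriv ℝ 2 f x - iteratedFDeriv ℝ 2 g x‖ * ∏ i : Fin 2, ‖![u, v] i‖ :=
        ContinuousMultilinearMap.le_opNorm _ _
    _ = ‖iteratedFDeriv ℝ 2 f x - iteratedFDeriv ℝ 2 g x‖ * ‖u‖ * ‖v‖ := by
        rw [Fin.prod_univ_two]; simp [mul_assoc]

private lemma norm_iFD1_sub_le' (f g : E → F) (x : E) :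
    ‖iteratedFDeriv ℝ 1 f x - iteratedFDeriv ℝ 1 g x‖ ≤ ‖fderiv ℝ f x - fderiv ℝ g x‖ := by
  refine ContinuousMultilinearMap.opNorm_le_bound (norm_nonneg _) fun m => ?_
  have h : (iteratedFDeriv ℝ 1 f x - iteratedFDeriv ℝ 1 g x) m
      = (fderiv ℝ f x - fderiv ℝ g x) (m 0) := by simp
  rw [h, Fin.prod_univ_one]
  exact ContinuousLinearMap.le_opNorm _ _

private lemma norm_iFD2_sub_le' (f g : E → F) (x : E) :
    ‖iteratedFDeriv ℝ 2 f x - iteratedFDeriv ℝ 2 g x‖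
      ≤ ‖fderiv ℝ (fderiv ℝ f) x - fderiv ℝ (fderiv ℝ g) x‖ := by
  refine ContinuousMultilinearMap.opNorm_le_bound (by positivity) fun m => ?_
  have h : (iteratedFDeriv ℝ 2 f x - iteratedFDeriv ℝ 2 g x) m
      = (fderiv ℝ (fderiv ℝ f) x - fderiv ℝ (fderiv ℝ g) x) (m 0) (m 1) := by
    simp [iteratedFDeriv_two_apply]
  rw [h, Fin.prod_univ_two, ← mul_assoc]
  calc ‖(fderiv ℝ (fderiv ℝ f) x - fderiv ℝ (fderiv ℝ g) x) (m 0) (m 1)‖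
      ≤ ‖(fderiv ℝ (fderiv ℝ f) x - fderiv ℝ (fderiv ℝ g) x) (m 0)‖ * ‖m 1‖ :=
        ContinuousLinearMap.le_opNorm _ _
    _ ≤ ‖fderiv ℝ (fderiv ℝ f) x - fderiv ℝ (fderiv ℝ g) x‖ * ‖m 0‖ * ‖m 1‖ := by
        gcongr; exact ContinuousLinearMap.le_opNorm _ _

private lemma norm_comp_sub_comp_le' {G : Type*} [NormedAddCommGroup G] [NormedSpace ℝ G]
    {H : Type*} [NormedAddCommGroup H] [NormedSpace ℝ H]
    (A₁ A₂ : F →L[ℝ] H) (B₁ B₂ : G →L[ℝ] F) :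
    ‖A₁.comp B₁ - A₂.comp B₂‖ ≤ ‖A₁‖ * ‖B₁ - B₂‖ + ‖A₁ - A₂‖ * ‖B₂‖ := by
  have h : A₁.comp B₁ - A₂.comp B₂ = A₁.comp (B₁ - B₂) + (A₁ - A₂).comp B₂ := by
    ext u; simp
  rw [h]
  refine le_trans (norm_add_le _ _) (add_le_add ?_ ?_) <;>
    exact ContinuousLinearMap.opNorm_comp_le _ _

end helpers

/-- Composition estimate in `C²`: for all bounds `L₁, L₂` on the first two derivatives
of `h₁, h₂` and `M₁, M₂, M₃` on the first three derivatives of `φ`, there is `C ≥ 0`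
such that `‖φ∘h₁ − φ∘h₂‖_{C²} ≤ C·(‖h₁−h₂‖_{C⁰} + ‖Dh₁−Dh₂‖_{C⁰} + ‖D²h₁−D²h₂‖_{C⁰})`
pointwise, uniformly over all such maps between normed spaces. -/
theorem composition_C2_difference_estimate
    (L₁ L₂ M₁ M₂ M₃ : ℝ)
    (hL₁ : 0 ≤ L₁) (hL₂ : 0 ≤ L₂) (hM₁ : 0 ≤ M₁) (hM₂ : 0 ≤ M₂) (hM₃ : 0 ≤ M₃) :
    ∃ C : ℝ, 0 ≤ C ∧
      ∀ (E : Type u) (F : Type v) [NormedAddCommGroup E] [NormedSpace ℝ E]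
        [NormedAddCommGroup F] [NormedSpace ℝ F]
        (h₁ h₂ : E → F) (φ : F → ℝ),
        ContDiff ℝ 2 h₁ → ContDiff ℝ 2 h₂ → ContDiff ℝ 3 φ →
        (∀ x, ‖iteratedFDeriv ℝ 1 h₁ x‖ ≤ L₁) →
        (∀ x, ‖iteratedFDeriv ℝ 1 h₂ x‖ ≤ L₁) →
        (∀ x, ‖iteratedFDeriv ℝ 2 h₁ x‖ ≤ L₂) →
        (∀ x, ‖iteratedFDeriv ℝ 2 h₂ x‖ ≤ L₂) →
        (∀ y, ‖iteratedFDeriv ℝ 1 φ y‖ ≤ M₁) →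
        (∀ y, ‖iteratedFDeriv ℝ 2 φ y‖ ≤ M₂) →
        (∀ y, ‖iteratedFDeriv ℝ 3 φ y‖ ≤ M₃) →
        ∀ d₀ d₁ d₂ : ℝ,
          (∀ y, ‖h₁ y - h₂ y‖ ≤ d₀) →
          (∀ y, ‖iteratedFDeriv ℝ 1 h₁ y - iteratedFDeriv ℝ 1 h₂ y‖ ≤ d₁) →
          (∀ y, ‖iteratedFDeriv ℝ 2 h₁ y - iteratedFDeriv ℝ 2 h₂ y‖ ≤ d₂) →
          ∀ x : E,
            |φ (h₁ x) - φ (h₂ x)| +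
                ‖iteratedFDeriv ℝ 1 (φ ∘ h₁) x - iteratedFDeriv ℝ 1 (φ ∘ h₂) x‖ +
                ‖iteratedFDeriv ℝ 2 (φ ∘ h₁) x - iteratedFDeriv ℝ 2 (φ ∘ h₂) x‖
              ≤ C * (d₀ + d₁ + d₂) := by
  refine ⟨3*M₁ + 3*M₂*L₁ + M₂*L₂ + M₃*L₁*L₁, by positivity, ?_⟩
  intro E F _ _ _ _ h₁ h₂ φ hh₁ hh₂ hφ bh₁L₁ bh₂L₁ bh₁L₂ bh₂L₂ bφ₁ bφ₂ bφ₃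
    d₀ d₁ d₂ hd₀ hd₁ hd₂ x
  -- nonnegativity of the dᵢ
  have h0d₀ : 0 ≤ d₀ := le_trans (norm_nonneg _) (hd₀ x)
  have h0d₁ : 0 ≤ d₁ := le_trans (norm_nonneg _) (hd₁ x)
  have h0d₂ : 0 ≤ d₂ := le_trans (norm_nonneg _) (hd₂ x)
  -- differentiability facts
  have hφd : Differentiable ℝ φ := hφ.differentiable (by norm_num)
  have hA : ContDiff ℝ 2 (fderiv ℝ φ) := hφ.fderiv_right (by norm_num)
  have hAd : Differentiable ℝ (fderiv ℝ φ) := hA.differentiable (by norm_num)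
  have hA' : ContDiff ℝ 1 (fderiv ℝ (fderiv ℝ φ)) := hA.fderiv_right (by norm_num)
  have hA'd : Differentiable ℝ (fderiv ℝ (fderiv ℝ φ)) := hA'.differentiable (by norm_num)
  have hh₁d : Differentiable ℝ h₁ := hh₁.differentiable (by norm_num)
  have hh₂d : Differentiable ℝ h₂ := hh₂.differentiable (by norm_num)
  have hB₁d : Differentiable ℝ (fderiv ℝ h₁) :=
    (hh₁.fderiv_right (m := 1) (by norm_num)).differentiable (by norm_num)
  have hB₂d : Differentiable ℝ (fderiv ℝ h₂) :=
    (hh₂.fderiv_right (m := 1) (by norm_num)).differentiable (by norm_num)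
  -- norm bounds in terms of fderiv
  have bA : ∀ y, ‖fderiv ℝ φ y‖ ≤ M₁ := fun y => by
    rw [norm_fderiv_eq_iFD1']; exact bφ₁ y
  have bA' : ∀ y, ‖fderiv ℝ (fderiv ℝ φ) y‖ ≤ M₂ := fun y => by
    rw [norm_fderiv_eq_iFD1', norm_iteratedFDeriv_fderiv]; exact bφ₂ y
  have bB₁ : ∀ y, ‖fderiv ℝ h₁ y‖ ≤ L₁ := fun y => by
    rw [norm_fderiv_eq_iFD1']; exact bh₁L₁ y
  have bB₂ : ∀ y, ‖fderiv ℝ h₂ y‖ ≤ L₁ := fun y => by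
    rw [norm_fderiv_eq_iFD1']; exact bh₂L₁ y
  have bQ₂ : ∀ y, ‖fderiv ℝ (fderiv ℝ h₂) y‖ ≤ L₂ := fun y => by
    rw [norm_fderiv_eq_iFD1', norm_iteratedFDeriv_fderiv]; exact bh₂L₂ y
  -- Lipschitz estimates via the mean value inequality
  have lipφ : ∀ a b : F, ‖φ a - φ b‖ ≤ M₁ * ‖a - b‖ := fun a b =>
    convex_univ.norm_image_sub_le_of_norm_fderiv_le (fun y _ => hφd y)
      (fun y _ => bA y) (Set.mem_univ _) (Set.mem_univ _)
  have lipA : ∀ a b : F, ‖fderiv ℝ φ a - fderiv ℝ φ b‖ ≤ M₂ * ‖a - b‖ := fun a b =>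
    convex_univ.norm_image_sub_le_of_norm_fderiv_le (fun y _ => hAd y)
      (fun y _ => bA' y) (Set.mem_univ _) (Set.mem_univ _)
  have lipA' : ∀ a b : F,
      ‖fderiv ℝ (fderiv ℝ φ) a - fderiv ℝ (fderiv ℝ φ) b‖ ≤ M₃ * ‖a - b‖ := fun a b => by
    refine convex_univ.norm_image_sub_le_of_norm_fderiv_le (𝕜 := ℝ) (f := fderiv ℝ (fderiv ℝ φ))
      (fun y _ => hA'd y) (fun y _ => ?_) (Set.mem_univ _) (Set.mem_univ _)
    rw [norm_fderiv_eq_iFD1', norm_iteratedFDeriv_fderiv, norm_iteratedFDeriv_fderiv]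
    exact bφ₃ y
  -- distances at the point x
  have e₀ : ‖h₁ x - h₂ x‖ ≤ d₀ := hd₀ x
  have e₁ : ‖fderiv ℝ h₁ x - fderiv ℝ h₂ x‖ ≤ d₁ :=
    le_trans (norm_fderiv_sub_le' h₁ h₂ x) (hd₁ x)
  have e₂ : ‖fderiv ℝ (fderiv ℝ h₁) x - fderiv ℝ (fderiv ℝ h₂) x‖ ≤ d₂ :=
    le_trans (norm_fderiv2_sub_le' h₁ h₂ x) (hd₂ x)
  -- differences of φ-derivatives at the two points
  have eA : ‖fderiv ℝ φ (h₁ x) - fderiv ℝ φ (h₂ x)‖ ≤ M₂ * d₀ :=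
    le_trans (lipA _ _) (mul_le_mul_of_nonneg_left e₀ hM₂)
  have eA' : ‖fderiv ℝ (fderiv ℝ φ) (h₁ x) - fderiv ℝ (fderiv ℝ φ) (h₂ x)‖ ≤ M₃ * d₀ :=
    le_trans (lipA' _ _) (mul_le_mul_of_nonneg_left e₀ hM₃)
  -- first derivatives of the compositions
  have hg₁ : fderiv ℝ (φ ∘ h₁) = fun y => (fderiv ℝ φ (h₁ y)).comp (fderiv ℝ h₁ y) := by
    funext y; exact fderiv_comp y (hφd (h₁ y)) (hh₁d y)
  have hg₂ : fderiv ℝ (φ ∘ h₂) = fun y => (fderiv ℝ φ (h₂ y)).comp (fderiv ℝ h₂ y) := by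
    funext y; exact fderiv_comp y (hφd (h₂ y)) (hh₂d y)
  -- Term 0
  have T0 : |φ (h₁ x) - φ (h₂ x)| ≤ M₁ * d₀ := by
    rw [← Real.norm_eq_abs]
    exact le_trans (lipφ _ _) (mul_le_mul_of_nonneg_left e₀ hM₁)
  -- Term 1
  have T1 : ‖iteratedFDeriv ℝ 1 (φ ∘ h₁) x - iteratedFDeriv ℝ 1 (φ ∘ h₂) x‖
      ≤ M₁ * d₁ + (M₂ * d₀) * L₁ := by
    refine le_trans (norm_iFD1_sub_le' _ _ x) ?_
    rw [congrFun hg₁ x, congrFun hg₂ x]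
    refine le_trans (norm_comp_sub_comp_le' _ _ _ _) (add_le_add ?_ ?_)
    · exact mul_le_mul (bA _) e₁ (norm_nonneg _) hM₁
    · exact mul_le_mul eA (bB₂ _) (norm_nonneg _) (by positivity)
  -- derivatives of y ↦ fderiv φ (h y)
  have hc₁ : DifferentiableAt ℝ (fun y => fderiv ℝ φ (h₁ y)) x :=
    (hAd (h₁ x)).comp x (hh₁d x)
  have hc₂ : DifferentiableAt ℝ (fun y => fderiv ℝ φ (h₂ y)) x :=
    (hAd (h₂ x)).comp x (hh₂d x)
  have hc₁' : fderiv ℝ (fun y => fderiv ℝ φ (h₁ y)) x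
      = (fderiv ℝ (fderiv ℝ φ) (h₁ x)).comp (fderiv ℝ h₁ x) :=
    fderiv_comp x (hAd (h₁ x)) (hh₁d x)
  have hc₂' : fderiv ℝ (fun y => fderiv ℝ φ (h₂ y)) x
      = (fderiv ℝ (fderiv ℝ φ) (h₂ x)).comp (fderiv ℝ h₂ x) :=
    fderiv_comp x (hAd (h₂ x)) (hh₂d x)
  -- second derivatives of the compositions
  have key₁ : fderiv ℝ (fderiv ℝ (φ ∘ h₁)) x =
      (ContinuousLinearMap.compL ℝ E F ℝ (fderiv ℝ φ (h₁ x))).comp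
          (fderiv ℝ (fderiv ℝ h₁) x) +
        ((ContinuousLinearMap.compL ℝ E F ℝ).flip (fderiv ℝ h₁ x)).comp
          ((fderiv ℝ (fderiv ℝ φ) (h₁ x)).comp (fderiv ℝ h₁ x)) := by
    rw [hg₁, fderiv_clm_comp hc₁ (hB₁d x), hc₁']
  have key₂ : fderiv ℝ (fderiv ℝ (φ ∘ h₂)) x =
      (ContinuousLinearMap.compL ℝ E F ℝ (fderiv ℝ φ (h₂ x))).comp
          (fderiv ℝ (fderiv ℝ h₂) x) +
        ((ContinuousLinearMap.compL ℝ E F ℝ).flip (fderiv ℝ h₂ x)).comp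
          ((fderiv ℝ (fderiv ℝ φ) (h₂ x)).comp (fderiv ℝ h₂ x)) := by
    rw [hg₂, fderiv_clm_comp hc₂ (hB₂d x), hc₂']
  -- bound on the difference of the P-parts
  have eP : ‖(fderiv ℝ (fderiv ℝ φ) (h₁ x)).comp (fderiv ℝ h₁ x)
        - (fderiv ℝ (fderiv ℝ φ) (h₂ x)).comp (fderiv ℝ h₂ x)‖
      ≤ M₂ * d₁ + (M₃ * d₀) * L₁ := by
    refine le_trans (norm_comp_sub_comp_le' _ _ _ _) (add_le_add ?_ ?_)
    · exact mul_le_mul (bA' _) e₁ (norm_nonneg _) hM₂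
    · exact mul_le_mul eA' (bB₂ _) (norm_nonneg _) (by positivity)
  -- Term 2
  have T2 : ‖iteratedFDeriv ℝ 2 (φ ∘ h₁) x - iteratedFDeriv ℝ 2 (φ ∘ h₂) x‖
      ≤ (M₁ * d₂ + (M₂ * d₀) * L₂) + ((M₂ * L₁) * d₁ + (M₂ * d₁ + (M₃ * d₀) * L₁) * L₁) := by
    refine le_trans (norm_iFD2_sub_le' _ _ x) ?_
    rw [key₁, key₂]
    refine ContinuousLinearMap.opNorm_le_bound _ (by positivity) fun v => ?_
    have expand :
        (((ContinuousLinearMap.compL ℝ E F ℝ (fderiv ℝ φ (h₁ x))).comp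
              (fderiv ℝ (fderiv ℝ h₁) x) +
            ((ContinuousLinearMap.compL ℝ E F ℝ).flip (fderiv ℝ h₁ x)).comp
              ((fderiv ℝ (fderiv ℝ φ) (h₁ x)).comp (fderiv ℝ h₁ x))) -
          ((ContinuousLinearMap.compL ℝ E F ℝ (fderiv ℝ φ (h₂ x))).comp
              (fderiv ℝ (fderiv ℝ h₂) x) +
            ((ContinuousLinearMap.compL ℝ E F ℝ).flip (fderiv ℝ h₂ x)).comp
              ((fderiv ℝ (fderiv ℝ φ) (h₂ x)).comp (fderiv ℝ h₂ x)))) v =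
        ((fderiv ℝ φ (h₁ x)).comp (fderiv ℝ (fderiv ℝ h₁) x v)
          - (fderiv ℝ φ (h₂ x)).comp (fderiv ℝ (fderiv ℝ h₂) x v)) +
        ((((fderiv ℝ (fderiv ℝ φ) (h₁ x)).comp (fderiv ℝ h₁ x)) v).comp (fderiv ℝ h₁ x)
          - (((fderiv ℝ (fderiv ℝ φ) (h₂ x)).comp (fderiv ℝ h₂ x)) v).comp (fderiv ℝ h₂ x)) := by
      ext u
      simp [ContinuousLinearMap.compL]
      abel
    rw [expand]
    refine le_trans (norm_add_le _ _) ?_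
    have piece1 : ‖(fderiv ℝ φ (h₁ x)).comp (fderiv ℝ (fderiv ℝ h₁) x v)
        - (fderiv ℝ φ (h₂ x)).comp (fderiv ℝ (fderiv ℝ h₂) x v)‖
        ≤ (M₁ * d₂ + (M₂ * d₀) * L₂) * ‖v‖ := by
      refine le_trans (norm_comp_sub_comp_le' _ _ _ _) ?_
      have i1 : ‖fderiv ℝ (fderiv ℝ h₁) x v - fderiv ℝ (fderiv ℝ h₂) x v‖ ≤ d₂ * ‖v‖ := by
        have : fderiv ℝ (fderiv ℝ h₁) x v - fderiv ℝ (fderiv ℝ h₂) x v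
            = (fderiv ℝ (fderiv ℝ h₁) x - fderiv ℝ (fderiv ℝ h₂) x) v := by simp
        rw [this]
        exact le_trans (ContinuousLinearMap.le_opNorm _ _)
          (mul_le_mul_of_nonneg_right e₂ (norm_nonneg _))
      have i2 : ‖fderiv ℝ (fderiv ℝ h₂) x v‖ ≤ L₂ * ‖v‖ :=
        le_trans (ContinuousLinearMap.le_opNorm _ _)
          (mul_le_mul_of_nonneg_right (bQ₂ x) (norm_nonneg _))
      calc ‖fderiv ℝ φ (h₁ x)‖ * ‖fderiv ℝ (fderiv ℝ h₁) x v - fderiv ℝ (fderiv ℝ h₂) x v‖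
            + ‖fderiv ℝ φ (h₁ x) - fderiv ℝ φ (h₂ x)‖ * ‖fderiv ℝ (fderiv ℝ h₂) x v‖
          ≤ M₁ * (d₂ * ‖v‖) + (M₂ * d₀) * (L₂ * ‖v‖) := by
            refine add_le_add ?_ ?_
            · exact mul_le_mul (bA _) i1 (norm_nonneg _) hM₁
            · exact mul_le_mul eA i2 (norm_nonneg _) (by positivity)
        _ = (M₁ * d₂ + (M₂ * d₀) * L₂) * ‖v‖ := by ring
    have piece2 : ‖(((fderiv ℝ (fderiv ℝ φ) (h₁ x)).comp (fderiv ℝ h₁ x)) v).comp (fderiv ℝ h₁ x)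
        - (((fderiv ℝ (fderiv ℝ φ) (h₂ x)).comp (fderiv ℝ h₂ x)) v).comp (fderiv ℝ h₂ x)‖
        ≤ ((M₂ * L₁) * d₁ + (M₂ * d₁ + (M₃ * d₀) * L₁) * L₁) * ‖v‖ := by
      refine le_trans (norm_comp_sub_comp_le' _ _ _ _) ?_
      have j1 : ‖((fderiv ℝ (fderiv ℝ φ) (h₁ x)).comp (fderiv ℝ h₁ x)) v‖
          ≤ (M₂ * L₁) * ‖v‖ := by
        refine le_trans (ContinuousLinearMap.le_opNorm _ _)
          (mul_le_mul_of_nonneg_right ?_ (norm_nonneg _))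
        exact le_trans (ContinuousLinearMap.opNorm_comp_le _ _)
          (mul_le_mul (bA' _) (bB₁ x) (norm_nonneg _) hM₂)
      have j2 : ‖((fderiv ℝ (fderiv ℝ φ) (h₁ x)).comp (fderiv ℝ h₁ x)) v
          - ((fderiv ℝ (fderiv ℝ φ) (h₂ x)).comp (fderiv ℝ h₂ x)) v‖
          ≤ (M₂ * d₁ + (M₃ * d₀) * L₁) * ‖v‖ := by
        have : ((fderiv ℝ (fderiv ℝ φ) (h₁ x)).comp (fderiv ℝ h₁ x)) v
            - ((fderiv ℝ (fderiv ℝ φ) (h₂ x)).comp (fderiv ℝ h₂ x)) v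
            = ((fderiv ℝ (fderiv ℝ φ) (h₁ x)).comp (fderiv ℝ h₁ x)
              - (fderiv ℝ (fderiv ℝ φ) (h₂ x)).comp (fderiv ℝ h₂ x)) v := by simp
        rw [this]
        exact le_trans (ContinuousLinearMap.le_opNorm _ _)
          (mul_le_mul_of_nonneg_right eP (norm_nonneg _))
      calc ‖((fderiv ℝ (fderiv ℝ φ) (h₁ x)).comp (fderiv ℝ h₁ x)) v‖
              * ‖fderiv ℝ h₁ x - fderiv ℝ h₂ x‖
            + ‖((fderiv ℝ (fderiv ℝ φ) (h₁ x)).comp (fderiv ℝ h₁ x)) v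
              - ((fderiv ℝ (fderiv ℝ φ) (h₂ x)).comp (fderiv ℝ h₂ x)) v‖ * ‖fderiv ℝ h₂ x‖
          ≤ ((M₂ * L₁) * ‖v‖) * d₁ + ((M₂ * d₁ + (M₃ * d₀) * L₁) * ‖v‖) * L₁ := by
            refine add_le_add ?_ ?_
            · exact mul_le_mul j1 e₁ (norm_nonneg _) (by positivity)
            · exact mul_le_mul j2 (bB₂ x) (norm_nonneg _) (by positivity)
        _ = ((M₂ * L₁) * d₁ + (M₂ * d₁ + (M₃ * d₀) * L₁) * L₁) * ‖v‖ := by ring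
    calc ‖(fderiv ℝ φ (h₁ x)).comp (fderiv ℝ (fderiv ℝ h₁) x v)
          - (fderiv ℝ φ (h₂ x)).comp (fderiv ℝ (fderiv ℝ h₂) x v)‖
        + ‖(((fderiv ℝ (fderiv ℝ φ) (h₁ x)).comp (fderiv ℝ h₁ x)) v).comp (fderiv ℝ h₁ x)
          - (((fderiv ℝ (fderiv ℝ φ) (h₂ x)).comp (fderiv ℝ h₂ x)) v).comp (fderiv ℝ h₂ x)‖
        ≤ (M₁ * d₂ + (M₂ * d₀) * L₂) * ‖v‖
          + ((M₂ * L₁) * d₁ + (M₂ * d₁ + (M₃ * d₀) * L₁) * L₁) * ‖v‖ := add_le_add piece1 piece2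
      _ = ((M₁ * d₂ + (M₂ * d₀) * L₂) + ((M₂ * L₁) * d₁ + (M₂ * d₁ + (M₃ * d₀) * L₁) * L₁))
            * ‖v‖ := by ring
  -- combine
  nlinarith [mul_nonneg hM₁ h0d₀, mul_nonneg hM₁ h0d₁, mul_nonneg hM₁ h0d₂,
    mul_nonneg (mul_nonneg hM₂ hL₁) h0d₀, mul_nonneg (mul_nonneg hM₂ hL₁) h0d₁,
    mul_nonneg (mul_nonneg hM₂ hL₁) h0d₂, mul_nonneg (mul_nonneg hM₂ hL₂) h0d₁,
    mul_nonneg (mul_nonneg hM₂ hL₂) h0d₂, mul_nonneg (mul_nonneg (mul_nonneg hM₃ hL₁) hL₁) h0d₁,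
    mul_nonneg (mul_nonneg (mul_nonneg hM₃ hL₁) hL₁) h0d₂]
end

section
/- Let X ⊆ ℝ^d be a nonempty compact convex set and Ω a set. Let K be a sectional transfer operator on sections Ω → M₁(X) (countable index set I, branches θ_i : Ω → Ω, weights p_i : Ω → [0,∞) with ∑_{i∈I} p_i(ω) = 1, and C³ fibre maps g_ω : ℝ^d → ℝ^d with g_ω(X) ⊆ X) whose derivative bounds L_k = sup_{ω∈Ω} sup_{x∈X} ‖D^k g_ω(x)‖ (k = 1,2,3) satisfy max{L₁ + L₂ + L₃, L₁² + 3·L₁·L₂, L₁³} ≤ λ for some 0 ≤ λ < 1. Let K′ be another sectional transfer operator of the same form on the same Ω and X, with its own countable branches, nonnegative weights summing to one, and Borel measurable fibre maps preserving X (no contraction assumed for K′). Suppose ν, ν′ : Ω → M₁(X) satisfy (Kν)_ω = ν_ω and (K′ν′)_ω = ν′_ω for all ω ∈ Ω, and let D ≥ 0 be such that N₃((Kν′)_ω, (K′ν′)_ω) ≤ D for every ω ∈ Ω. Then N₃(ν_ω, ν′_ω) ≤ D/(1−λ) for every ω ∈ Ω. -/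
open MeasureTheory ContinuousLinearMap
set_option maxSynthPendingDepth 2
set_option maxHeartbeats 4000000
set_option linter.unusedSectionVars false
set_option linter.unusedVariables false


open MeasureTheory

/-- `⨆_{x ∈ X} ‖D^j φ(x)‖`, the supremum over `X` of the norm of the `j`-th iterated
Fréchet derivative of `φ`. -/
noncomputable def supDerivOn {E : Type*} [NormedAddCommGroup E] [NormedSpace ℝ E]
    (X : Set E) (j : ℕ) (φ : E → ℝ) : ℝ :=
  ⨆ x ∈ X, ‖iteratedFDeriv ℝ j φ x‖

/-- The `C³`-dual seminorm distance between two finite Borel measures: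
`N₃(σ,σ′) = sup { ∫ φ dσ − ∫ φ dσ′ : φ C³, ∑_{j=1}^{3} sup_{x∈X} ‖D^j φ(x)‖ ≤ 1 }`. -/
noncomputable def N3 {E : Type*} [NormedAddCommGroup E] [NormedSpace ℝ E]
    [MeasurableSpace E] (X : Set E) (σ σ' : Measure E) : ℝ :=
  ⨆ φ : {φ : E → ℝ // ContDiff ℝ 3 φ ∧
      supDerivOn X 1 φ + supDerivOn X 2 φ + supDerivOn X 3 φ ≤ 1},
    (∫ x, φ.1 x ∂σ) - ∫ x, φ.1 x ∂σ'

/-- The sectional transfer operator (full-branch form):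
`(Kν)_ω = ∑_{i∈I} p_i(ω) · (g_{θ_i(ω)})_* ν_{θ_i(ω)}`. -/
noncomputable def sectionalTransfer {Ω X I : Type*} [MeasurableSpace X]
    (θ : I → Ω → Ω) (p : I → Ω → ℝ) (g : Ω → X → X)
    (ν : Ω → Measure X) (ω : Ω) : Measure X :=
  Measure.sum fun i => ENNReal.ofReal (p i ω) • ((ν (θ i ω)).map (g (θ i ω)))

set_option maxSynthPendingDepth 2

section CompBounds
variable {E F G H : Type*} [NormedAddCommGroup E] [NormedSpace ℝ E]
  [NormedAddCommGroup F] [NormedSpace ℝ F] [NormedAddCommGroup G] [NormedSpace ℝ G]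
  [NormedAddCommGroup H] [NormedSpace ℝ H]

lemma norm_compL_apply_le (c : G →L[ℝ] H) : ‖compL ℝ F G H c‖ ≤ ‖c‖ := by
  refine opNorm_le_bound _ (norm_nonneg c) fun v => ?_
  rw [compL_apply]; exact opNorm_comp_le _ _

lemma norm_compL_flip_apply_le (u : F →L[ℝ] G) : ‖(compL ℝ F G H).flip u‖ ≤ ‖u‖ := by
  refine opNorm_le_bound _ (norm_nonneg u) fun c => ?_
  simp only [flip_apply, compL_apply]
  exact le_trans (opNorm_comp_le _ _) (by rw [mul_comm])

lemma norm_fderiv_clm_comp_le {c : E → G →L[ℝ] H} {u : E → F →L[ℝ] G} {x : E}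
    (hc : DifferentiableAt ℝ c x) (hu : DifferentiableAt ℝ u x) :
    ‖fderiv ℝ (fun y => (c y).comp (u y)) x‖ ≤
      ‖c x‖ * ‖fderiv ℝ u x‖ + ‖u x‖ * ‖fderiv ℝ c x‖ := by
  rw [fderiv_clm_comp hc hu]
  refine le_trans (norm_add_le _ _) (add_le_add ?_ ?_)
  · refine le_trans (opNorm_comp_le _ _) ?_
    exact mul_le_mul_of_nonneg_right (norm_compL_apply_le _) (norm_nonneg _)
  · refine le_trans (opNorm_comp_le _ _) ?_
    exact mul_le_mul_of_nonneg_right (norm_compL_flip_apply_le _) (norm_nonneg _)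

end CompBounds

section NormIter
variable {E F : Type*} [NormedAddCommGroup E] [NormedSpace ℝ E]
  [NormedAddCommGroup F] [NormedSpace ℝ F] {f : E → F} {x : E}

lemma norm_iter_one : ‖iteratedFDeriv ℝ 1 f x‖ = ‖fderiv ℝ f x‖ := by
  rw [show (1 : ℕ) = 0 + 1 from rfl, ← norm_iteratedFDeriv_fderiv, norm_iteratedFDeriv_zero]

lemma norm_iter_two : ‖iteratedFDeriv ℝ 2 f x‖ = ‖fderiv ℝ (fderiv ℝ f) x‖ := by
  rw [show (2 : ℕ) = 1 + 1 from rfl, ← norm_iteratedFDeriv_fderiv, norm_iter_one]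

lemma norm_iter_three : ‖iteratedFDeriv ℝ 3 f x‖ = ‖fderiv ℝ (fderiv ℝ (fderiv ℝ f)) x‖ := by
  rw [show (3 : ℕ) = 2 + 1 from rfl, ← norm_iteratedFDeriv_fderiv, norm_iter_two]

end NormIter
set_option maxHeartbeats 4000000
section MainComp
variable {E F G : Type*} [NormedAddCommGroup E] [NormedSpace ℝ E]
  [NormedAddCommGroup F] [NormedSpace ℝ F] [NormedAddCommGroup G] [NormedSpace ℝ G]

lemma comp_iteratedFDeriv_bound
    {φ : F → G} {g : E → F} (hφ : ContDiff ℝ 3 φ) (hg : ContDiff ℝ 3 g) (x : E)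
    {N₁ N₂ N₃ L₁ L₂ L₃ : ℝ}
    (hN₁ : ‖iteratedFDeriv ℝ 1 φ (g x)‖ ≤ N₁)
    (hN₂ : ‖iteratedFDeriv ℝ 2 φ (g x)‖ ≤ N₂)
    (hN₃ : ‖iteratedFDeriv ℝ 3 φ (g x)‖ ≤ N₃)
    (hL₁ : ‖iteratedFDeriv ℝ 1 g x‖ ≤ L₁)
    (hL₂ : ‖iteratedFDeriv ℝ 2 g x‖ ≤ L₂)
    (hL₃ : ‖iteratedFDeriv ℝ 3 g x‖ ≤ L₃) :
    ‖iteratedFDeriv ℝ 1 (fun y => φ (g y)) x‖ ≤ N₁ * L₁ ∧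
    ‖iteratedFDeriv ℝ 2 (fun y => φ (g y)) x‖ ≤ N₂ * L₁ ^ 2 + N₁ * L₂ ∧
    ‖iteratedFDeriv ℝ 3 (fun y => φ (g y)) x‖ ≤
      N₃ * L₁ ^ 3 + 3 * N₂ * L₁ * L₂ + N₁ * L₃ := by
  -- nonnegativity
  have hN₁0 : 0 ≤ N₁ := le_trans (norm_nonneg _) hN₁
  have hN₂0 : 0 ≤ N₂ := le_trans (norm_nonneg _) hN₂
  have hN₃0 : 0 ≤ N₃ := le_trans (norm_nonneg _) hN₃
  have hL₁0 : 0 ≤ L₁ := le_trans (norm_nonneg _) hL₁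
  have hL₂0 : 0 ≤ L₂ := le_trans (norm_nonneg _) hL₂
  have hL₃0 : 0 ≤ L₃ := le_trans (norm_nonneg _) hL₃
  -- smoothness of derivatives
  set φ₁ := fderiv ℝ φ with hφ₁def
  set φ₂ := fderiv ℝ φ₁ with hφ₂def
  set g₁ := fderiv ℝ g with hg₁def
  set g₂ := fderiv ℝ g₁ with hg₂def
  have hφ₁s : ContDiff ℝ 2 φ₁ := hφ.fderiv_right (by norm_num)
  have hφ₂s : ContDiff ℝ 1 φ₂ := hφ₁s.fderiv_right (by norm_num)
  have hg₁s : ContDiff ℝ 2 g₁ := hg.fderiv_right (by norm_num)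
  have hg₂s : ContDiff ℝ 1 g₂ := hg₁s.fderiv_right (by norm_num)
  have hdφ : Differentiable ℝ φ := hφ.differentiable (by norm_num)
  have hdφ₁ : Differentiable ℝ φ₁ := hφ₁s.differentiable (by norm_num)
  have hdφ₂ : Differentiable ℝ φ₂ := hφ₂s.differentiable (by norm_num)
  have hdg : Differentiable ℝ g := hg.differentiable (by norm_num)
  have hdg₁ : Differentiable ℝ g₁ := hg₁s.differentiable (by norm_num)
  have hdg₂ : Differentiable ℝ g₂ := hg₂s.differentiable (by norm_num)
  -- translate hypotheses
  rw [norm_iter_one] at hN₁ hL₁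
  rw [norm_iter_two] at hN₂ hL₂
  rw [norm_iter_three] at hN₃ hL₃
  -- the first derivative of the composition
  set c : E → F →L[ℝ] G := fun y => φ₁ (g y) with hcdef
  have hdc : Differentiable ℝ c := hdφ₁.comp hdg
  have hcs : ContDiff ℝ 2 c := hφ₁s.comp (hg.of_le (by norm_num))
  have hc_eq : ∀ y, fderiv ℝ c y = (φ₂ (g y)).comp (g₁ y) := fun y => by
    have := fderiv_comp y (hdφ₁ (g y)) (hdg y)
    exact this
  have hc_bd : ‖fderiv ℝ c x‖ ≤ N₂ * L₁ := by
    rw [hc_eq x]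
    exact le_trans (ContinuousLinearMap.opNorm_comp_le _ _)
      (mul_le_mul hN₂ hL₁ (norm_nonneg _) hN₂0)
  have h1_eq : ∀ y, fderiv ℝ (fun z => φ (g z)) y = (c y).comp (g₁ y) := fun y => by
    have := fderiv_comp y (hdφ (g y)) (hdg y)
    exact this
  have h1fun : fderiv ℝ (fun z => φ (g z)) = fun y => (c y).comp (g₁ y) := funext h1_eq
  refine ⟨?_, ?_, ?_⟩
  · rw [norm_iter_one, h1_eq x]
    exact le_trans (ContinuousLinearMap.opNorm_comp_le _ _)
      (mul_le_mul hN₁ hL₁ (norm_nonneg _) hN₁0)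
  · rw [norm_iter_two, h1fun]
    refine le_trans (norm_fderiv_clm_comp_le (hdc x) (hdg₁ x)) ?_
    have b1 : ‖c x‖ * ‖fderiv ℝ g₁ x‖ ≤ N₁ * L₂ :=
      mul_le_mul hN₁ hL₂ (norm_nonneg _) hN₁0
    have b2 : ‖g₁ x‖ * ‖fderiv ℝ c x‖ ≤ L₁ * (N₂ * L₁) :=
      mul_le_mul hL₁ hc_bd (norm_nonneg _) hL₁0
    exact le_trans (add_le_add b1 b2) (le_of_eq (by ring))
  · rw [norm_iter_three, h1fun]
    -- second derivative as a sum of two terms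
    set CL := ContinuousLinearMap.compL ℝ E F G with hCLdef
    set F₁ : E → (E →L[ℝ] F) →L[ℝ] E →L[ℝ] G := fun y => CL (c y) with hF₁def
    set c₁ : E → E →L[ℝ] F →L[ℝ] G := fderiv ℝ c with hc₁def
    have hdF₁ : Differentiable ℝ F₁ := CL.differentiable.comp hdc
    have hdd : Differentiable ℝ (fun y => CL.flip (g₁ y)) :=
      CL.flip.differentiable.comp hdg₁
    have hc₁s : ContDiff ℝ 1 c₁ := hcs.fderiv_right (by norm_num)
    have hdc₁ : Differentiable ℝ c₁ := hc₁s.differentiable (by norm_num)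
    have h2_eq : (fderiv ℝ fun y => (c y).comp (g₁ y)) =
        fun y => (F₁ y).comp (g₂ y) + (CL.flip (g₁ y)).comp (c₁ y) := by
      funext y
      exact fderiv_clm_comp (hdc y) (hdg₁ y)
    rw [h2_eq]
    have hdT₁ : DifferentiableAt ℝ (fun y => (F₁ y).comp (g₂ y)) x :=
      (hdF₁ x).clm_comp (hdg₂ x)
    have hdT₂ : DifferentiableAt ℝ (fun y => (CL.flip (g₁ y)).comp (c₁ y)) x :=
      (hdd x).clm_comp (hdc₁ x)
    rw [fderiv_fun_add hdT₁ hdT₂]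
    refine le_trans (norm_add_le (E := E →L[ℝ] E →L[ℝ] E →L[ℝ] G) _ _) ?_
    -- bound the derivative of the first term
    have hF₁_eq : ∀ y, fderiv ℝ F₁ y = CL.comp (fderiv ℝ c y) := fun y => by
      have h := fderiv_comp y (CL.differentiableAt (x := c y)) (hdc y)
      simp only [ContinuousLinearMap.fderiv] at h; exact h
    have hF₁_bd : ‖fderiv ℝ F₁ x‖ ≤ N₂ * L₁ := by
      rw [hF₁_eq x]
      refine le_trans (ContinuousLinearMap.opNorm_comp_le _ _) ?_
      refine le_trans (mul_le_mul_of_nonneg_right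
        (ContinuousLinearMap.norm_compL_le ℝ E F G) (norm_nonneg _)) ?_
      rw [one_mul]; exact hc_bd
    have hF₁x_bd : ‖F₁ x‖ ≤ N₁ := le_trans (norm_compL_apply_le _) hN₁
    have bT₁ : ‖fderiv ℝ (fun y => (F₁ y).comp (g₂ y)) x‖ ≤
        N₁ * L₃ + L₂ * (N₂ * L₁) := by
      refine le_trans (norm_fderiv_clm_comp_le (hdF₁ x) (hdg₂ x)) ?_
      have b1 : ‖F₁ x‖ * ‖fderiv ℝ g₂ x‖ ≤ N₁ * L₃ :=
        mul_le_mul hF₁x_bd hL₃ (norm_nonneg (fderiv ℝ g₂ x)) hN₁0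
      have b2 : ‖g₂ x‖ * ‖fderiv ℝ F₁ x‖ ≤ L₂ * (N₂ * L₁) :=
        mul_le_mul hL₂ hF₁_bd (norm_nonneg (fderiv ℝ F₁ x)) hL₂0
      exact add_le_add b1 b2
    -- bound the derivative of the second term
    have hd_eq : ∀ y, fderiv ℝ (fun z => CL.flip (g₁ z)) y = CL.flip.comp (fderiv ℝ g₁ y) :=
      fun y => by
        have h := fderiv_comp y (CL.flip.differentiableAt (x := g₁ y)) (hdg₁ y)
        simp only [ContinuousLinearMap.fderiv] at h; exact h
    have hd_bd : ‖fderiv ℝ (fun z => CL.flip (g₁ z)) x‖ ≤ L₂ := by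
      rw [hd_eq x]
      refine le_trans (ContinuousLinearMap.opNorm_comp_le _ _) ?_
      have : ‖CL.flip‖ ≤ 1 := by
        rw [ContinuousLinearMap.opNorm_flip]
        exact ContinuousLinearMap.norm_compL_le ℝ E F G
      refine le_trans (mul_le_mul_of_nonneg_right this (norm_nonneg _)) ?_
      rw [one_mul]; exact hL₂
    -- bound on fderiv of c₁
    have hc₁_bd : ‖fderiv ℝ c₁ x‖ ≤ N₂ * L₂ + L₁ * (N₃ * L₁) := by
      have hc₁fun : c₁ = fun y => (φ₂ (g y)).comp (g₁ y) := funext hc_eq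
      rw [hc₁fun]
      refine le_trans (norm_fderiv_clm_comp_le ((hdφ₂.comp hdg) x) (hdg₁ x)) ?_
      have hφ₂g_eq : fderiv ℝ (fun y => φ₂ (g y)) x = (fderiv ℝ φ₂ (g x)).comp (g₁ x) := by
        have := fderiv_comp x (hdφ₂ (g x)) (hdg x)
        exact this
      have hφ₂g_bd : ‖fderiv ℝ (fun y => φ₂ (g y)) x‖ ≤ N₃ * L₁ := by
        rw [hφ₂g_eq]
        exact le_trans (ContinuousLinearMap.opNorm_comp_le _ _)
          (mul_le_mul hN₃ hL₁ (norm_nonneg _) hN₃0)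
      have b1 : ‖φ₂ (g x)‖ * ‖fderiv ℝ g₁ x‖ ≤ N₂ * L₂ :=
        mul_le_mul hN₂ hL₂ (norm_nonneg _) hN₂0
      have b2 : ‖g₁ x‖ * ‖fderiv ℝ (fun y => φ₂ (g y)) x‖ ≤ L₁ * (N₃ * L₁) :=
        mul_le_mul hL₁ hφ₂g_bd (norm_nonneg (fderiv ℝ (fun y => φ₂ (g y)) x)) hL₁0
      exact add_le_add b1 b2
    have hc₁x_bd : ‖c₁ x‖ ≤ N₂ * L₁ := hc_bd
    have bT₂ : ‖fderiv ℝ (fun y => (CL.flip (g₁ y)).comp (c₁ y)) x‖ ≤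
        L₁ * (N₂ * L₂ + L₁ * (N₃ * L₁)) + N₂ * L₁ * L₂ := by
      refine le_trans (norm_fderiv_clm_comp_le (hdd x) (hdc₁ x)) ?_
      have h1 : ‖CL.flip (g₁ x)‖ ≤ L₁ := le_trans (norm_compL_flip_apply_le _) hL₁
      have b1 : ‖CL.flip (g₁ x)‖ * ‖fderiv ℝ c₁ x‖ ≤ L₁ * (N₂ * L₂ + L₁ * (N₃ * L₁)) :=
        mul_le_mul h1 hc₁_bd (norm_nonneg (fderiv ℝ c₁ x)) hL₁0
      have b2 : ‖c₁ x‖ * ‖fderiv ℝ (fun z => CL.flip (g₁ z)) x‖ ≤ N₂ * L₁ * L₂ :=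
        mul_le_mul hc₁x_bd hd_bd (norm_nonneg _) (by positivity)
      exact add_le_add b1 b2
    exact le_trans (add_le_add bT₁ bT₂) (le_of_eq (by ring))

end MainComp

section SupDeriv
variable {E : Type*} [NormedAddCommGroup E] [NormedSpace ℝ E] {X : Set E}

lemma supDerivOn_le {φ : E → ℝ} {j : ℕ} {C : ℝ} (hC : 0 ≤ C)
    (h : ∀ x ∈ X, ‖iteratedFDeriv ℝ j φ x‖ ≤ C) : supDerivOn X j φ ≤ C := by
  refine Real.iSup_le (fun x => ?_) hC
  by_cases hx : x ∈ X
  · rw [ciSup_pos hx]; exact h x hx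
  · haveI : IsEmpty (x ∈ X) := ⟨fun h => hx h⟩
    rw [Real.iSup_of_isEmpty]
    exact hC

lemma le_supDerivOn (hX : IsCompact X) {φ : E → ℝ} (hφ : ContDiff ℝ 3 φ)
    {j : ℕ} (hj : j ≤ 3) {x : E} (hx : x ∈ X) :
    ‖iteratedFDeriv ℝ j φ x‖ ≤ supDerivOn X j φ := by
  have hcont : Continuous fun y => ‖iteratedFDeriv ℝ j φ y‖ :=
    (hφ.continuous_iteratedFDeriv (by exact_mod_cast hj)).norm
  obtain ⟨C, hC⟩ := (hX.image hcont).bddAbove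
  have hB : BddAbove (Set.range fun y => ⨆ _ : y ∈ X, ‖iteratedFDeriv ℝ j φ y‖) := by
    refine ⟨max C 0, ?_⟩
    rintro - ⟨y, rfl⟩
    dsimp only
    by_cases hy : y ∈ X
    · rw [ciSup_pos hy]
      exact le_max_of_le_left (hC ⟨y, hy, rfl⟩)
    · haveI : IsEmpty (y ∈ X) := ⟨fun h => hy h⟩
      rw [Real.iSup_of_isEmpty]
      exact le_max_right _ _
  have := le_ciSup hB x
  rwa [ciSup_pos hx] at this

lemma supDerivOn_nonneg (hX : IsCompact X) (hXne : X.Nonempty) {φ : E → ℝ}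
    (hφ : ContDiff ℝ 3 φ) {j : ℕ} (hj : j ≤ 3) : 0 ≤ supDerivOn X j φ := by
  obtain ⟨x, hx⟩ := hXne
  exact le_trans (norm_nonneg _) (le_supDerivOn hX hφ hj hx)

end SupDeriv

set_option linter.unusedSectionVars false
section MeasureAux
variable {E : Type*} [NormedAddCommGroup E] [NormedSpace ℝ E]
  [MeasurableSpace E] [OpensMeasurableSpace E] {X : Set E}

lemma ae_mem_of_compl_zero {σ : Measure E} (h : σ Xᶜ = 0) : ∀ᵐ x ∂σ, x ∈ X := by
  rw [ae_iff]
  exact h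

lemma integrable_of_bound {σ : Measure E} [IsFiniteMeasure σ] (h0 : σ Xᶜ = 0)
    {f : E → ℝ} (hm : AEStronglyMeasurable f σ) {C : ℝ} (hC : ∀ x ∈ X, ‖f x‖ ≤ C) :
    Integrable f σ :=
  ⟨hm, HasFiniteIntegral.of_bounded ((ae_mem_of_compl_zero h0).mono fun x hx => hC x hx)⟩

lemma integral_le_of_bound {σ : Measure E} [IsProbabilityMeasure σ] (h0 : σ Xᶜ = 0)
    {f : E → ℝ} (hint : Integrable f σ) {C : ℝ} (hC : ∀ x ∈ X, f x ≤ C) :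
    ∫ x, f x ∂σ ≤ C := by
  have := integral_mono_ae hint (integrable_const C)
    ((ae_mem_of_compl_zero h0).mono fun x hx => hC x hx)
  simpa using this

lemma bound_le_integral {σ : Measure E} [IsProbabilityMeasure σ] (h0 : σ Xᶜ = 0)
    {f : E → ℝ} (hint : Integrable f σ) {C : ℝ} (hC : ∀ x ∈ X, C ≤ f x) :
    C ≤ ∫ x, f x ∂σ := by
  have := integral_mono_ae (integrable_const C) hint
    ((ae_mem_of_compl_zero h0).mono fun x hx => hC x hx)
  simpa using this

end MeasureAux

set_option linter.unusedSectionVars false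

section N3Aux
variable {E : Type*} [NormedAddCommGroup E] [NormedSpace ℝ E]
  [MeasurableSpace E] [OpensMeasurableSpace E] {X : Set E}

lemma testfn_fderiv_le (hXcpt : IsCompact X)
    {φ : E → ℝ} (hφ : ContDiff ℝ 3 φ)
    (hs : supDerivOn X 1 φ + supDerivOn X 2 φ + supDerivOn X 3 φ ≤ 1)
    {z : E} (hz : z ∈ X) : ‖fderiv ℝ φ z‖ ≤ 1 := by
  have h1 : ‖iteratedFDeriv ℝ 1 φ z‖ ≤ supDerivOn X 1 φ :=
    le_supDerivOn hXcpt hφ (by norm_num) hz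
  have h2 : 0 ≤ supDerivOn X 2 φ := supDerivOn_nonneg hXcpt ⟨z, hz⟩ hφ (by norm_num)
  have h3 : 0 ≤ supDerivOn X 3 φ := supDerivOn_nonneg hXcpt ⟨z, hz⟩ hφ (by norm_num)
  rw [← norm_iter_one]
  linarith

lemma testfn_lip (hXcpt : IsCompact X) (hXconv : Convex ℝ X)
    {φ : E → ℝ} (hφ : ContDiff ℝ 3 φ)
    (hs : supDerivOn X 1 φ + supDerivOn X 2 φ + supDerivOn X 3 φ ≤ 1)
    {x y : E} (hx : x ∈ X) (hy : y ∈ X) : ‖φ y - φ x‖ ≤ Metric.diam X := by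
  have := hXconv.norm_image_sub_le_of_norm_fderiv_le
    (f := φ) (fun z _ => (hφ.differentiable (by norm_num)).differentiableAt)
    (fun z hz => testfn_fderiv_le hXcpt hφ hs hz) hx hy
  refine le_trans this ?_
  rw [one_mul, ← dist_eq_norm]
  exact Metric.dist_le_diam_of_mem hXcpt.isBounded hy hx

lemma testfn_integrable (hXcpt : IsCompact X) (hXconv : Convex ℝ X)
    {x₀ : E} (hx₀ : x₀ ∈ X)
    {φ : E → ℝ} (hφ : ContDiff ℝ 3 φ)
    (hs : supDerivOn X 1 φ + supDerivOn X 2 φ + supDerivOn X 3 φ ≤ 1)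
    {σ : Measure E} [IsFiniteMeasure σ] (h0 : σ Xᶜ = 0) : Integrable φ σ := by
  refine integrable_of_bound h0 hφ.continuous.aestronglyMeasurable
    (C := ‖φ x₀‖ + Metric.diam X) fun x hx => ?_
  have := testfn_lip hXcpt hXconv hφ hs hx₀ hx
  calc ‖φ x‖ = ‖φ x₀ + (φ x - φ x₀)‖ := by ring_nf
  _ ≤ ‖φ x₀‖ + ‖φ x - φ x₀‖ := norm_add_le _ _
  _ ≤ ‖φ x₀‖ + Metric.diam X := by linarith

lemma testfn_integral_diff_le (hXcpt : IsCompact X) (hXconv : Convex ℝ X)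
    (hXne : X.Nonempty)
    {φ : E → ℝ} (hφ : ContDiff ℝ 3 φ)
    (hs : supDerivOn X 1 φ + supDerivOn X 2 φ + supDerivOn X 3 φ ≤ 1)
    {σ σ' : Measure E} [IsProbabilityMeasure σ] [IsProbabilityMeasure σ']
    (h0 : σ Xᶜ = 0) (h0' : σ' Xᶜ = 0) :
    (∫ x, φ x ∂σ) - ∫ x, φ x ∂σ' ≤ 2 * Metric.diam X := by
  obtain ⟨x₀, hx₀⟩ := hXne
  have hint : Integrable φ σ := testfn_integrable hXcpt hXconv hx₀ hφ hs h0
  have hint' : Integrable φ σ' := testfn_integrable hXcpt hXconv hx₀ hφ hs h0'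
  have hub : ∫ x, φ x ∂σ ≤ φ x₀ + Metric.diam X := by
    refine integral_le_of_bound h0 hint fun x hx => ?_
    have := testfn_lip hXcpt hXconv hφ hs hx₀ hx
    have h2 : φ x - φ x₀ ≤ ‖φ x - φ x₀‖ := le_abs_self _
    linarith
  have hlb : φ x₀ - Metric.diam X ≤ ∫ x, φ x ∂σ' := by
    refine bound_le_integral h0' hint' fun x hx => ?_
    have := testfn_lip hXcpt hXconv hφ hs hx₀ hx
    have h2 : -(φ x - φ x₀) ≤ ‖φ x - φ x₀‖ := neg_le_abs _
    linarith
  linarith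

instance testfn_nonempty : Nonempty {φ : E → ℝ // ContDiff ℝ 3 φ ∧
    supDerivOn X 1 φ + supDerivOn X 2 φ + supDerivOn X 3 φ ≤ 1} := by
  refine ⟨⟨fun _ => 0, contDiff_const, ?_⟩⟩
  have h : ∀ j : ℕ, supDerivOn X j (fun _ : E => (0 : ℝ)) ≤ 0 := fun j =>
    supDerivOn_le le_rfl fun x _ => by simp [iteratedFDeriv_zero_fun]
  have := h 1; have := h 2; have := h 3
  linarith

lemma N3_bddAbove (hXcpt : IsCompact X) (hXconv : Convex ℝ X) (hXne : X.Nonempty)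
    {σ σ' : Measure E} [IsProbabilityMeasure σ] [IsProbabilityMeasure σ']
    (h0 : σ Xᶜ = 0) (h0' : σ' Xᶜ = 0) :
    BddAbove (Set.range fun φ : {φ : E → ℝ // ContDiff ℝ 3 φ ∧
      supDerivOn X 1 φ + supDerivOn X 2 φ + supDerivOn X 3 φ ≤ 1} =>
      (∫ x, φ.1 x ∂σ) - ∫ x, φ.1 x ∂σ') := by
  refine ⟨2 * Metric.diam X, ?_⟩
  rintro - ⟨φ, rfl⟩
  exact testfn_integral_diff_le hXcpt hXconv hXne φ.2.1 φ.2.2 h0 h0'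

lemma le_N3 (hXcpt : IsCompact X) (hXconv : Convex ℝ X) (hXne : X.Nonempty)
    {σ σ' : Measure E} [IsProbabilityMeasure σ] [IsProbabilityMeasure σ']
    (h0 : σ Xᶜ = 0) (h0' : σ' Xᶜ = 0)
    (φ : {φ : E → ℝ // ContDiff ℝ 3 φ ∧
      supDerivOn X 1 φ + supDerivOn X 2 φ + supDerivOn X 3 φ ≤ 1}) :
    (∫ x, φ.1 x ∂σ) - ∫ x, φ.1 x ∂σ' ≤ N3 X σ σ' :=
  le_ciSup (N3_bddAbove hXcpt hXconv hXne h0 h0') φ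

lemma N3_le {σ σ' : Measure E} {C : ℝ}
    (h : ∀ φ : {φ : E → ℝ // ContDiff ℝ 3 φ ∧
      supDerivOn X 1 φ + supDerivOn X 2 φ + supDerivOn X 3 φ ≤ 1},
      (∫ x, φ.1 x ∂σ) - ∫ x, φ.1 x ∂σ' ≤ C) : N3 X σ σ' ≤ C :=
  ciSup_le h

lemma N3_nonneg (hXcpt : IsCompact X) (hXconv : Convex ℝ X) (hXne : X.Nonempty)
    {σ σ' : Measure E} [IsProbabilityMeasure σ] [IsProbabilityMeasure σ']
    (h0 : σ Xᶜ = 0) (h0' : σ' Xᶜ = 0) : 0 ≤ N3 X σ σ' := by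
  have hz : ∀ j : ℕ, supDerivOn X j (fun _ : E => (0 : ℝ)) ≤ 0 := fun j =>
    supDerivOn_le le_rfl fun x _ => by simp [iteratedFDeriv_zero_fun]
  have := le_N3 hXcpt hXconv hXne h0 h0'
    ⟨fun _ => 0, contDiff_const, by have := hz 1; have := hz 2; have := hz 3; linarith⟩
  simpa using this

end N3Aux

section Transfer
variable {E : Type*} [NormedAddCommGroup E] [NormedSpace ℝ E]
  [MeasurableSpace E] [OpensMeasurableSpace E] {X : Set E}
variable {Ω I : Type*} [Countable I]

lemma summable_of_tsum_one {p : I → ℝ} (hp1 : ∑' i, p i = 1) : Summable p := by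
  by_contra h
  rw [tsum_eq_zero_of_not_summable h] at hp1
  norm_num at hp1

lemma transfer_apply {θ : I → Ω → Ω} {p : I → Ω → ℝ} {g : Ω → E → E}
    {ν : Ω → Measure E} {ω : Ω} {s : Set E} (hs : MeasurableSet s) :
    sectionalTransfer θ p g ν ω s =
      ∑' i, ENNReal.ofReal (p i ω) * (ν (θ i ω)).map (g (θ i ω)) s := by
  simp [sectionalTransfer, Measure.sum_apply _ hs]

lemma transfer_isProb {θ : I → Ω → Ω} {p : I → Ω → ℝ} {g : Ω → E → E}
    {ν : Ω → Measure E} {ω : Ω} (hg : ∀ ω, Measurable (g ω))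
    (hν : ∀ ω, IsProbabilityMeasure (ν ω))
    (hp0 : ∀ i, 0 ≤ p i ω) (hp1 : ∑' i, p i ω = 1) :
    IsProbabilityMeasure (sectionalTransfer θ p g ν ω) := by
  constructor
  rw [transfer_apply MeasurableSet.univ]
  have h1 : ∀ i, (ν (θ i ω)).map (g (θ i ω)) Set.univ = 1 := fun i => by
    rw [Measure.map_apply (hg _) MeasurableSet.univ]
    simp [(hν _).measure_univ]
  simp only [h1, mul_one]
  rw [← ENNReal.ofReal_tsum_of_nonneg hp0 (summable_of_tsum_one hp1), hp1,
    ENNReal.ofReal_one]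

lemma transfer_supported {θ : I → Ω → Ω} {p : I → Ω → ℝ} {g : Ω → E → E}
    {ν : Ω → Measure E} {ω : Ω} (hX : MeasurableSet X) (hg : ∀ ω, Measurable (g ω))
    (hgX : ∀ ω, Set.MapsTo (g ω) X X) (hν0 : ∀ ω, ν ω Xᶜ = 0) :
    sectionalTransfer θ p g ν ω Xᶜ = 0 := by
  rw [transfer_apply hX.compl]
  have h1 : ∀ i, (ν (θ i ω)).map (g (θ i ω)) Xᶜ = 0 := fun i => by
    rw [Measure.map_apply (hg _) hX.compl]
    refine measure_mono_null (fun x hx hxX => hx (hgX _ hxX)) (hν0 _)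
  simp [h1]

lemma integral_sectionalTransfer {θ : I → Ω → Ω} {p : I → Ω → ℝ} {g : Ω → E → E}
    {ν : Ω → Measure E} {ω : Ω} (hg : ∀ ω, Measurable (g ω))
    (hp0 : ∀ i, 0 ≤ p i ω) {φ : E → ℝ} (hφ : Continuous φ)
    (hint : Integrable φ (sectionalTransfer θ p g ν ω)) :
    ∫ x, φ x ∂(sectionalTransfer θ p g ν ω) =
      ∑' i, p i ω * ∫ x, φ (g (θ i ω) x) ∂(ν (θ i ω)) := by
  rw [sectionalTransfer] at hint ⊢
  rw [integral_sum_measure hint]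
  congr 1
  funext i
  rw [integral_smul_measure, integral_map (hg _).aemeasurable hφ.aestronglyMeasurable]
  simp [ENNReal.toReal_ofReal (hp0 i), smul_eq_mul]

end Transfer

section Contraction
variable {E : Type*} [NormedAddCommGroup E] [NormedSpace ℝ E]
  [MeasurableSpace E] [OpensMeasurableSpace E] {X : Set E}

lemma contraction_step (hXcpt : IsCompact X) (hXconv : Convex ℝ X) (hXne : X.Nonempty)
    {G : E → E} (hG : ContDiff ℝ 3 G) (hGX : Set.MapsTo G X X)
    {L₁ L₂ L₃ lam : ℝ} (hlam0 : 0 ≤ lam)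
    (hL₁ : ∀ x ∈ X, ‖iteratedFDeriv ℝ 1 G x‖ ≤ L₁)
    (hL₂ : ∀ x ∈ X, ‖iteratedFDeriv ℝ 2 G x‖ ≤ L₂)
    (hL₃ : ∀ x ∈ X, ‖iteratedFDeriv ℝ 3 G x‖ ≤ L₃)
    (hmax : max (L₁ + L₂ + L₃) (max (L₁ ^ 2 + 3 * L₁ * L₂) (L₁ ^ 3)) ≤ lam)
    {μ μ' : Measure E} [IsProbabilityMeasure μ] [IsProbabilityMeasure μ']
    (hμ : μ Xᶜ = 0) (hμ' : μ' Xᶜ = 0)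
    {M : ℝ} (hM0 : 0 ≤ M) (hMN : N3 X μ μ' ≤ M)
    (φ : {φ : E → ℝ // ContDiff ℝ 3 φ ∧
      supDerivOn X 1 φ + supDerivOn X 2 φ + supDerivOn X 3 φ ≤ 1}) :
    (∫ x, φ.1 (G x) ∂μ) - (∫ x, φ.1 (G x) ∂μ') ≤ lam * M := by
  obtain ⟨x₀, hx₀⟩ := hXne
  obtain ⟨φf, hφ3, hφs⟩ := φ
  dsimp only at *
  -- nonnegativity facts
  have hL₁0 : 0 ≤ L₁ := le_trans (norm_nonneg _) (hL₁ x₀ hx₀)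
  have hL₂0 : 0 ≤ L₂ := le_trans (norm_nonneg _) (hL₂ x₀ hx₀)
  have hL₃0 : 0 ≤ L₃ := le_trans (norm_nonneg _) (hL₃ x₀ hx₀)
  set N₁ := supDerivOn X 1 φf with hN₁def
  set N₂ := supDerivOn X 2 φf with hN₂def
  set N₃ := supDerivOn X 3 φf with hN₃def
  have hN₁0 : 0 ≤ N₁ := supDerivOn_nonneg hXcpt ⟨x₀, hx₀⟩ hφ3 (by norm_num)
  have hN₂0 : 0 ≤ N₂ := supDerivOn_nonneg hXcpt ⟨x₀, hx₀⟩ hφ3 (by norm_num)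
  have hN₃0 : 0 ≤ N₃ := supDerivOn_nonneg hXcpt ⟨x₀, hx₀⟩ hφ3 (by norm_num)
  -- composed function and its derivative bounds on X
  set ψ : E → ℝ := fun x => φf (G x) with hψdef
  have hψ3 : ContDiff ℝ 3 ψ := hφ3.comp hG
  have hb : ∀ x ∈ X,
      ‖iteratedFDeriv ℝ 1 ψ x‖ ≤ N₁ * L₁ ∧
      ‖iteratedFDeriv ℝ 2 ψ x‖ ≤ N₂ * L₁ ^ 2 + N₁ * L₂ ∧
      ‖iteratedFDeriv ℝ 3 ψ x‖ ≤ N₃ * L₁ ^ 3 + 3 * N₂ * L₁ * L₂ + N₁ * L₃ := by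
    intro x hx
    exact comp_iteratedFDeriv_bound hφ3 hG x
      (le_supDerivOn hXcpt hφ3 (by norm_num) (hGX hx))
      (le_supDerivOn hXcpt hφ3 (by norm_num) (hGX hx))
      (le_supDerivOn hXcpt hφ3 (by norm_num) (hGX hx))
      (hL₁ x hx) (hL₂ x hx) (hL₃ x hx)
  -- total bound on the sum of derivative seminorms of ψ
  have hsum : N₁ * L₁ + (N₂ * L₁ ^ 2 + N₁ * L₂) +
      (N₃ * L₁ ^ 3 + 3 * N₂ * L₁ * L₂ + N₁ * L₃) ≤ lam := by
    have e1 : N₁ * (L₁ + L₂ + L₃) ≤ N₁ * lam :=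
      mul_le_mul_of_nonneg_left (le_trans (le_max_left _ _) hmax) hN₁0
    have e2 : N₂ * (L₁ ^ 2 + 3 * L₁ * L₂) ≤ N₂ * lam :=
      mul_le_mul_of_nonneg_left
        (le_trans (le_trans (le_max_left _ _) (le_max_right _ _)) hmax) hN₂0
    have e3 : N₃ * L₁ ^ 3 ≤ N₃ * lam :=
      mul_le_mul_of_nonneg_left
        (le_trans (le_trans (le_max_right _ _) (le_max_right _ _)) hmax) hN₃0
    have e4 : (N₁ + N₂ + N₃) * lam ≤ 1 * lam :=
      mul_le_mul_of_nonneg_right hφs hlam0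
    nlinarith
  -- scaled test function argument, for every ε > 0
  have hkey : ∀ ε : ℝ, 0 < ε →
      (∫ x, ψ x ∂μ) - (∫ x, ψ x ∂μ') ≤ (lam + ε) * M := by
    intro ε hε
    have hpos : 0 < lam + ε := by linarith
    set r : ℝ := (lam + ε)⁻¹ with hrdef
    have hr0 : 0 ≤ r := le_of_lt (inv_pos.mpr hpos)
    have hsc : ∀ j : ℕ, j ≤ 3 → ∀ x : E,
        ‖iteratedFDeriv ℝ j (fun y => r * ψ y) x‖ = r * ‖iteratedFDeriv ℝ j ψ x‖ := by
      intro j hj x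
      have : (fun y => r * ψ y) = r • ψ := by funext y; simp [smul_eq_mul]
      rw [this, iteratedFDeriv_const_smul_apply (hψ3.of_le (by exact_mod_cast hj)).contDiffAt,
        norm_smul]
      simp [abs_of_nonneg hr0]
    have hrψ3 : ContDiff ℝ 3 (fun y => r * ψ y) := hψ3.const_smul r
    have hrsup : supDerivOn X 1 (fun y => r * ψ y) + supDerivOn X 2 (fun y => r * ψ y) +
        supDerivOn X 3 (fun y => r * ψ y) ≤ 1 := by
      have s1 : supDerivOn X 1 (fun y => r * ψ y) ≤ r * (N₁ * L₁) :=
        supDerivOn_le (by positivity) fun x hx => by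
          rw [hsc 1 (by norm_num) x]
          exact mul_le_mul_of_nonneg_left (hb x hx).1 hr0
      have s2 : supDerivOn X 2 (fun y => r * ψ y) ≤ r * (N₂ * L₁ ^ 2 + N₁ * L₂) :=
        supDerivOn_le (by positivity) fun x hx => by
          rw [hsc 2 (by norm_num) x]
          exact mul_le_mul_of_nonneg_left (hb x hx).2.1 hr0
      have s3 : supDerivOn X 3 (fun y => r * ψ y) ≤
          r * (N₃ * L₁ ^ 3 + 3 * N₂ * L₁ * L₂ + N₁ * L₃) :=
        supDerivOn_le (by positivity) fun x hx => by
          rw [hsc 3 (by norm_num) x]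
          exact mul_le_mul_of_nonneg_left (hb x hx).2.2 hr0
      have : r * (N₁ * L₁) + r * (N₂ * L₁ ^ 2 + N₁ * L₂) +
          r * (N₃ * L₁ ^ 3 + 3 * N₂ * L₁ * L₂ + N₁ * L₃) ≤ r * (lam + ε) := by
        have := mul_le_mul_of_nonneg_left hsum hr0
        nlinarith
      rw [hrdef] at this
      rw [inv_mul_cancel₀ (ne_of_gt hpos)] at this
      linarith
    have h1 := le_N3 hXcpt hXconv ⟨x₀, hx₀⟩ hμ hμ' ⟨fun y => r * ψ y, hrψ3, hrsup⟩
    dsimp only at h1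
    rw [integral_const_mul, integral_const_mul] at h1
    have h2 : r * ((∫ x, ψ x ∂μ) - ∫ x, ψ x ∂μ') ≤ M := by
      rw [mul_sub]; exact le_trans h1 hMN
    have h3 := mul_le_mul_of_nonneg_left h2 (le_of_lt hpos)
    rw [← mul_assoc, mul_inv_cancel₀ (ne_of_gt hpos), one_mul] at h3
    exact h3
  -- pass to the limit ε → 0
  refine le_of_forall_pos_le_add fun δ hδ => ?_
  have hε : 0 < δ / (M + 1) := by positivity
  have := hkey _ hε
  have hM1 : M / (M + 1) ≤ 1 := by
    rw [div_le_one (by linarith)]; linarith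
  calc (∫ x, ψ x ∂μ) - (∫ x, ψ x ∂μ') ≤ (lam + δ / (M + 1)) * M := this
  _ = lam * M + δ * (M / (M + 1)) := by ring
  _ ≤ lam * M + δ * 1 := by
      have := mul_le_mul_of_nonneg_left hM1 (le_of_lt hδ)
      linarith
  _ = lam * M + δ := by ring

end Contraction

/-- Stability of fixed points of sectional transfer operators: if `K` is a sectional
transfer operator whose `C³` fibre maps preserve the compact convex `X ⊆ ℝ^d` with
derivative bounds satisfying `max{L₁+L₂+L₃, L₁²+3L₁L₂, L₁³} ≤ λ < 1`, if `K′` is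
another sectional transfer operator of the same form on `Ω` and `X`, and if `ν, ν′` are
fixed points of `K, K′` respectively with `N₃((Kν′)_ω, (K′ν′)_ω) ≤ D` for all `ω`, then
`N₃(ν_ω, ν′_ω) ≤ D/(1−λ)` for all `ω`. -/
theorem fixedPoint_N3_stability
    {d : ℕ} (X : Set (EuclideanSpace ℝ (Fin d)))
    (hXcpt : IsCompact X) (hXconv : Convex ℝ X) (hXne : X.Nonempty)
    {Ω I I' : Type*} [Countable I] [Countable I']
    -- the contracting operator K
    (θ : I → Ω → Ω) (p : I → Ω → ℝ)
    (hp0 : ∀ i ω, 0 ≤ p i ω) (hp1 : ∀ ω, ∑' i, p i ω = 1)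
    (g : Ω → EuclideanSpace ℝ (Fin d) → EuclideanSpace ℝ (Fin d))
    (hg3 : ∀ ω, ContDiff ℝ 3 (g ω)) (hgX : ∀ ω, Set.MapsTo (g ω) X X)
    (L₁ L₂ L₃ lam : ℝ) (hlam0 : 0 ≤ lam) (hlam1 : lam < 1)
    (hL₁ : ∀ ω, ∀ x ∈ X, ‖iteratedFDeriv ℝ 1 (g ω) x‖ ≤ L₁)
    (hL₂ : ∀ ω, ∀ x ∈ X, ‖iteratedFDeriv ℝ 2 (g ω) x‖ ≤ L₂)
    (hL₃ : ∀ ω, ∀ x ∈ X, ‖iteratedFDeriv ℝ 3 (g ω) x‖ ≤ L₃)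
    (hmax : max (L₁ + L₂ + L₃) (max (L₁ ^ 2 + 3 * L₁ * L₂) (L₁ ^ 3)) ≤ lam)
    -- the second operator K′ (no contraction assumed)
    (θ' : I' → Ω → Ω) (p' : I' → Ω → ℝ)
    (hp'0 : ∀ i ω, 0 ≤ p' i ω) (hp'1 : ∀ ω, ∑' i, p' i ω = 1)
    (g' : Ω → EuclideanSpace ℝ (Fin d) → EuclideanSpace ℝ (Fin d))
    (hg'm : ∀ ω, Measurable (g' ω)) (hg'X : ∀ ω, Set.MapsTo (g' ω) X X)
    -- the fixed points
    (ν ν' : Ω → Measure (EuclideanSpace ℝ (Fin d)))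
    (hνp : ∀ ω, IsProbabilityMeasure (ν ω)) (hν'p : ∀ ω, IsProbabilityMeasure (ν' ω))
    (hνX : ∀ ω, ν ω Xᶜ = 0) (hν'X : ∀ ω, ν' ω Xᶜ = 0)
    (hνfix : ∀ ω, ν ω = sectionalTransfer θ p g ν ω)
    (hν'fix : ∀ ω, ν' ω = sectionalTransfer θ' p' g' ν' ω)
    (D : ℝ) (hD : 0 ≤ D)
    (hKdiff : ∀ ω,
      N3 X (sectionalTransfer θ p g ν' ω) (sectionalTransfer θ' p' g' ν' ω) ≤ D) :
    ∀ ω : Ω, N3 X (ν ω) (ν' ω) ≤ D / (1 - lam) := by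
  intro ω₀
  haveI : Nonempty Ω := ⟨ω₀⟩
  have hXm : MeasurableSet X := hXcpt.isClosed.measurableSet
  have hgm : ∀ ω, Measurable (g ω) := fun ω => (hg3 ω).continuous.measurable
  have h1lam : 0 < 1 - lam := by linarith
  obtain ⟨z₀, hz₀⟩ := hXne
  -- the uniform bound M
  set M := ⨆ ω, N3 X (ν ω) (ν' ω) with hMdef
  have hbdd : BddAbove (Set.range fun ω => N3 X (ν ω) (ν' ω)) := by
    refine ⟨2 * Metric.diam X, ?_⟩
    rintro - ⟨ω, rfl⟩
    haveI := hνp ω; haveI := hν'p ω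
    exact N3_le fun φ =>
      testfn_integral_diff_le hXcpt hXconv ⟨z₀, hz₀⟩ φ.2.1 φ.2.2 (hνX ω) (hν'X ω)
  have hMle : ∀ ω, N3 X (ν ω) (ν' ω) ≤ M := fun ω => le_ciSup hbdd ω
  have hM0 : 0 ≤ M := by
    haveI := hνp ω₀; haveI := hν'p ω₀
    exact le_trans (N3_nonneg hXcpt hXconv ⟨z₀, hz₀⟩ (hνX ω₀) (hν'X ω₀)) (hMle ω₀)
  -- key estimate
  have key : ∀ ω : Ω, N3 X (ν ω) (ν' ω) ≤ lam * M + D := by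
    intro ω
    haveI hT1p : IsProbabilityMeasure (sectionalTransfer θ p g ν ω) :=
      transfer_isProb hgm hνp (fun i => hp0 i ω) (hp1 ω)
    haveI hT2p : IsProbabilityMeasure (sectionalTransfer θ p g ν' ω) :=
      transfer_isProb hgm hν'p (fun i => hp0 i ω) (hp1 ω)
    haveI hT3p : IsProbabilityMeasure (sectionalTransfer θ' p' g' ν' ω) :=
      transfer_isProb hg'm hν'p (fun i => hp'0 i ω) (hp'1 ω)
    have hT1X : sectionalTransfer θ p g ν ω Xᶜ = 0 :=
      transfer_supported hXm hgm hgX hνX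
    have hT2X : sectionalTransfer θ p g ν' ω Xᶜ = 0 :=
      transfer_supported hXm hgm hgX hν'X
    have hT3X : sectionalTransfer θ' p' g' ν' ω Xᶜ = 0 :=
      transfer_supported hXm hg'm hg'X hν'X
    refine N3_le fun φ => ?_
    set C := ‖φ.1 z₀‖ + Metric.diam X with hCdef
    have hφbX : ∀ y ∈ X, ‖φ.1 y‖ ≤ C := fun y hy => by
      have h := testfn_lip hXcpt hXconv φ.2.1 φ.2.2 hz₀ hy
      calc ‖φ.1 y‖ = ‖φ.1 z₀ + (φ.1 y - φ.1 z₀)‖ := by ring_nf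
      _ ≤ ‖φ.1 z₀‖ + ‖φ.1 y - φ.1 z₀‖ := norm_add_le _ _
      _ ≤ C := by rw [hCdef]; linarith
    have hφc : Continuous φ.1 := φ.2.1.continuous
    have hint1 : Integrable φ.1 (sectionalTransfer θ p g ν ω) :=
      integrable_of_bound hT1X hφc.aestronglyMeasurable hφbX
    have hint2 : Integrable φ.1 (sectionalTransfer θ p g ν' ω) :=
      integrable_of_bound hT2X hφc.aestronglyMeasurable hφbX
    have hA : ∫ x, φ.1 x ∂(sectionalTransfer θ p g ν ω) =
        ∑' i, p i ω * ∫ x, φ.1 (g (θ i ω) x) ∂(ν (θ i ω)) :=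
      integral_sectionalTransfer hgm (fun i => hp0 i ω) hφc hint1
    have hA' : ∫ x, φ.1 x ∂(sectionalTransfer θ p g ν' ω) =
        ∑' i, p i ω * ∫ x, φ.1 (g (θ i ω) x) ∂(ν' (θ i ω)) :=
      integral_sectionalTransfer hgm (fun i => hp0 i ω) hφc hint2
    -- bounds on the individual integrals
    have hIb : ∀ (νa : Ω → Measure (EuclideanSpace ℝ (Fin d))),
        (∀ ω, IsProbabilityMeasure (νa ω)) → (∀ ω, νa ω Xᶜ = 0) →
        ∀ i, |∫ x, φ.1 (g (θ i ω) x) ∂(νa (θ i ω))| ≤ C := by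
      intro νa hνap hνaX i
      haveI := hνap (θ i ω)
      have hint : Integrable (fun x => φ.1 (g (θ i ω) x)) (νa (θ i ω)) :=
        integrable_of_bound (hνaX _)
          (hφc.comp (hg3 _).continuous).aestronglyMeasurable
          (fun x hx => hφbX _ (hgX _ hx))
      refine abs_le.mpr ⟨?_, ?_⟩
      · refine bound_le_integral (hνaX _) hint fun x hx => ?_
        have h5 := hφbX _ (hgX (θ i ω) hx)
        rw [Real.norm_eq_abs, abs_le] at h5
        linarith [h5.1]
      · refine integral_le_of_bound (hνaX _) hint fun x hx => ?_
        have h5 := hφbX _ (hgX (θ i ω) hx)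
        rw [Real.norm_eq_abs, abs_le] at h5
        linarith [h5.2]
    have hCp : Summable (fun i => p i ω) := summable_of_tsum_one (hp1 ω)
    have hsummAux : ∀ (νa : Ω → Measure (EuclideanSpace ℝ (Fin d))),
        (∀ ω, IsProbabilityMeasure (νa ω)) → (∀ ω, νa ω Xᶜ = 0) →
        Summable (fun i => p i ω * ∫ x, φ.1 (g (θ i ω) x) ∂(νa (θ i ω))) := by
      intro νa hνap hνaX
      refine Summable.of_norm_bounded (hCp.mul_right C) fun i => ?_
      rw [Real.norm_eq_abs, abs_mul, abs_of_nonneg (hp0 i ω)]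
      exact mul_le_mul_of_nonneg_left (hIb νa hνap hνaX i) (hp0 i ω)
    have s1 := hsummAux ν hνp hνX
    have s2 := hsummAux ν' hν'p hν'X
    -- termwise contraction
    have hdiff_le : ∀ i,
        p i ω * (∫ x, φ.1 (g (θ i ω) x) ∂(ν (θ i ω))) -
          p i ω * (∫ x, φ.1 (g (θ i ω) x) ∂(ν' (θ i ω))) ≤ p i ω * (lam * M) := by
      intro i
      rw [← mul_sub]
      refine mul_le_mul_of_nonneg_left ?_ (hp0 i ω)
      haveI := hνp (θ i ω); haveI := hν'p (θ i ω)
      exact contraction_step hXcpt hXconv ⟨z₀, hz₀⟩ (hg3 _) (hgX _) hlam0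
        (hL₁ _) (hL₂ _) (hL₃ _) hmax (hνX _) (hν'X _) hM0 (hMle _) φ
    have hfb : (∫ x, φ.1 x ∂(sectionalTransfer θ p g ν ω)) -
        ∫ x, φ.1 x ∂(sectionalTransfer θ p g ν' ω) ≤ lam * M := by
      rw [hA, hA', ← Summable.tsum_sub s1 s2]
      refine le_trans (Summable.tsum_le_tsum hdiff_le (s1.sub s2) (hCp.mul_right _)) ?_
      rw [tsum_mul_right, hp1 ω, one_mul]
    have hsb : (∫ x, φ.1 x ∂(sectionalTransfer θ p g ν' ω)) -
        ∫ x, φ.1 x ∂(sectionalTransfer θ' p' g' ν' ω) ≤ D :=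
      le_trans (le_N3 hXcpt hXconv ⟨z₀, hz₀⟩ hT2X hT3X φ) (hKdiff ω)
    calc (∫ x, φ.1 x ∂(ν ω)) - ∫ x, φ.1 x ∂(ν' ω)
        = ((∫ x, φ.1 x ∂(sectionalTransfer θ p g ν ω)) -
            ∫ x, φ.1 x ∂(sectionalTransfer θ p g ν' ω)) +
          ((∫ x, φ.1 x ∂(sectionalTransfer θ p g ν' ω)) -
            ∫ x, φ.1 x ∂(sectionalTransfer θ' p' g' ν' ω)) := by
          rw [← hνfix ω, ← hν'fix ω]; ring
    _ ≤ lam * M + D := add_le_add hfb hsb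
  -- conclude
  have hMfinal : M ≤ lam * M + D := ciSup_le key
  have hMD : M ≤ D / (1 - lam) := by
    rw [le_div_iff₀ h1lam]
    nlinarith
  exact le_trans (hMle ω₀) hMD
end
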